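/- arXiv:1402.7000 — 4 statements merged into one kernel-verified Lean document; each statement's English description precedes it below -/
import Mathlib

section
/- Let τ be a complex number with strictly positive imaginary part, let n be a natural number and let k be an integer. Then the sum over all nonzero lattice points vanishes: ∑'_{(a,b) ∈ ℤ×ℤ, (a,b) ≠ (0,0)} (aτ + b)^{-k} · (a·conj(τ) + b)^{-(2n+1-k)} = 0, where the powers are integer (zpow) powers in ℂ, conj denotes complex conjugation, and ∑' denotes the topological tsum over the subtype of nonzero pairs. (The sum vanishes because the summand is odd under (a,b) ↦ (−a,−b), the total weight 2n+1 being odd.) -/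
/-- The lattice sum `∑_{(a,b) ∈ ℤ²∖{0}} (aτ+b)^{-k} (aτ̄+b)^{-(2n+1-k)}` vanishes
for `τ` in the upper half plane, since the summand is odd under `(a,b) ↦ (-a,-b)`. -/
theorem elliptic_odd_wheel_sum_vanishes (τ : ℂ) (hτ : 0 < τ.im) (n : ℕ) (k : ℤ) :
    ∑' p : {p : ℤ × ℤ // p ≠ 0},
      ((p.1.1 : ℂ) * τ + (p.1.2 : ℂ)) ^ (-k) *
        ((p.1.1 : ℂ) * (starRingEnd ℂ τ) + (p.1.2 : ℂ)) ^ (-(2 * (n : ℤ) + 1 - k)) = 0 := by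
  set f : {p : ℤ × ℤ // p ≠ 0} → ℂ := fun p =>
    ((p.1.1 : ℂ) * τ + (p.1.2 : ℂ)) ^ (-k) *
      ((p.1.1 : ℂ) * (starRingEnd ℂ τ) + (p.1.2 : ℂ)) ^ (-(2 * (n : ℤ) + 1 - k)) with hf
  let e : {p : ℤ × ℤ // p ≠ 0} ≃ {p : ℤ × ℤ // p ≠ 0} :=
    (Equiv.neg (ℤ × ℤ)).subtypeEquiv (fun p => by simp [neg_eq_zero])
  have hodd : ∀ p, f (e p) = - f p := by
    intro p
    have h0 : ((e p).1 : ℤ × ℤ) = -(p.1 : ℤ × ℤ) := by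
      simp [e, Equiv.subtypeEquiv_apply]
    have h1 : ((e p).1.1 : ℂ) = -(p.1.1 : ℂ) := by rw [h0, Prod.fst_neg]; push_cast; ring
    have h2 : ((e p).1.2 : ℂ) = -(p.1.2 : ℂ) := by rw [h0, Prod.snd_neg]; push_cast; ring
    simp only [hf, h1, h2]
    have hA : (-(p.1.1 : ℂ)) * τ + (-(p.1.2 : ℂ)) = -((p.1.1 : ℂ) * τ + (p.1.2 : ℂ)) := by ring
    have hB : (-(p.1.1 : ℂ)) * (starRingEnd ℂ τ) + (-(p.1.2 : ℂ))
        = -((p.1.1 : ℂ) * (starRingEnd ℂ τ) + (p.1.2 : ℂ)) := by ring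
    rw [hA, hB]
    rcases Int.even_or_odd k with hk | hk
    · have hek : Even (-k) := hk.neg
      have hok : Odd (-(2 * (n : ℤ) + 1 - k)) :=
        (Odd.sub_even ⟨(n : ℤ), by ring⟩ hk).neg
      rw [hek.neg_zpow, hok.neg_zpow]
      ring
    · have hok : Odd (-k) := hk.neg
      have hek : Even (-(2 * (n : ℤ) + 1 - k)) :=
        (Odd.sub_odd ⟨(n : ℤ), by ring⟩ hk).neg
      rw [hok.neg_zpow, hek.neg_zpow]
      ring
  have key : ∑' p, f p = - ∑' p, f p := by
    conv_lhs => rw [← e.tsum_eq f]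
    calc ∑' p, f (e p) = ∑' p, - f p := tsum_congr hodd
      _ = - ∑' p, f p := tsum_neg
  exact add_self_eq_zero.mp (eq_neg_iff_add_eq_zero.mp key)
end

section
/- Let n ≥ 1, let t : Fin n → ℝ with t i > 0 for all i, and let ε > 0. Define the n×n real matrix M(t,ε) := (1/4) • A(t,ε), where A(t,ε) i j = 1/ε + (if i = j then 1/(t i) else 0). Then M(t,ε) is invertible and every entry of its inverse satisfies the bound |(M(t,ε)⁻¹) i j| ≤ 4 · min (t i) (t j). -/
/-- Lemma C.1 of the paper: for `M(t,ε) = (1/4)·A(t,ε)` with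
`A(t,ε) i j = 1/ε + δᵢⱼ/tᵢ`, the matrix `M(t,ε)` is invertible and
`|(M⁻¹) i j| ≤ 4·min(tᵢ,tⱼ)`. -/
theorem inverse_feynman_matrix_entry_bound (n : ℕ) (hn : 1 ≤ n) (t : Fin n → ℝ)
    (ht : ∀ i, 0 < t i) (ε : ℝ) (hε : 0 < ε) :
    IsUnit ((1 / 4 : ℝ) • Matrix.of fun i j : Fin n => 1 / ε + if i = j then 1 / t i else 0) ∧
    ∀ i j : Fin n,
      |((1 / 4 : ℝ) • Matrix.of fun i j : Fin n =>
          1 / ε + if i = j then 1 / t i else 0)⁻¹ i j| ≤ 4 * min (t i) (t j) := by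
  haveI : NeZero n := ⟨by omega⟩
  set S : ℝ := ∑ k, t k with hSdef
  have hS : 0 < S := Finset.sum_pos (fun i _ => ht i) ⟨⟨0, hn⟩, Finset.mem_univ _⟩
  have hεS : 0 < ε + S := by linarith
  have hε0 : ε ≠ 0 := hε.ne'
  have hεS0 : ε + S ≠ 0 := hεS.ne'
  have htle : ∀ i, t i ≤ S := fun i =>
    Finset.single_le_sum (fun k _ => (ht k).le) (Finset.mem_univ i)
  set M : Matrix (Fin n) (Fin n) ℝ :=
    (1 / 4 : ℝ) • Matrix.of fun i j : Fin n => 1 / ε + if i = j then 1 / t i else 0 with hM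
  set B : Matrix (Fin n) (Fin n) ℝ :=
    Matrix.of fun i j => 4 * ((if i = j then t i else 0) - t i * t j / (ε + S)) with hB
  have hc : ∀ j : Fin n, (∑ k, ((if k = j then t k else 0) - t k * t j / (ε + S)))
      = t j - S * t j / (ε + S) := by
    intro j
    rw [Finset.sum_sub_distrib]
    simp only [Finset.sum_ite_eq', Finset.mem_univ, if_true]
    congr 1
    rw [hSdef, Finset.sum_mul, Finset.sum_div]
  have hMB : M * B = 1 := by
    ext i j
    rw [Matrix.mul_apply]
    have step : ∀ k : Fin n, M i k * B k j
        = (1 / ε) * ((if k = j then t k else 0) - t k * t j / (ε + S)) * 4 / 4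
          + (if i = k then (1 / t i) * (4 * ((if k = j then t k else 0)
              - t k * t j / (ε + S))) / 4 else 0) := by
      intro k
      by_cases h : i = k <;> simp [hM, hB, Matrix.smul_apply, h] <;> ring
    rw [Finset.sum_congr rfl fun k _ => step k, Finset.sum_add_distrib,
      Finset.sum_ite_eq Finset.univ i _ ]
    simp only [Finset.mem_univ, if_true]
    have : (∑ k, (1 / ε) * ((if k = j then t k else 0) - t k * t j / (ε + S)) * 4 / 4)
        = (1 / ε) * (∑ k, ((if k = j then t k else 0) - t k * t j / (ε + S))) := by
      rw [Finset.mul_sum]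
      exact Finset.sum_congr rfl fun k _ => by ring
    rw [this, hc j, Matrix.one_apply]
    have hti0 : t i ≠ 0 := (ht i).ne'
    by_cases h : i = j
    · subst h
      simp only [if_pos rfl]
      field_simp
      simp only [if_true]
      ring
    · simp only [if_neg h]
      field_simp
      ring
  have hinv : Invertible M := invertibleOfRightInverse M B hMB
  have hMi : M⁻¹ = B := Matrix.inv_eq_right_inv hMB
  refine ⟨isUnit_of_invertible M, fun i j => ?_⟩
  rw [show ((1 / 4 : ℝ) • Matrix.of fun i j : Fin n =>
      1 / ε + if i = j then 1 / t i else 0)⁻¹ = M⁻¹ from rfl, hMi]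
  have hBij : B i j = 4 * ((if i = j then t i else 0) - t i * t j / (ε + S)) := rfl
  rw [hBij]
  by_cases h : i = j
  · subst h
    rw [if_pos rfl, min_self]
    have h1 : t i * t i / (ε + S) ≤ t i := by
      rw [div_le_iff₀ hεS]
      nlinarith [htle i, (ht i).le]
    have h2 : 0 ≤ t i * t i / (ε + S) :=
      div_nonneg (mul_nonneg (ht i).le (ht i).le) hεS.le
    rw [abs_of_nonneg (by linarith)]
    linarith
  · rw [if_neg h, zero_sub, mul_neg, abs_neg,
      abs_of_nonneg (mul_nonneg (by norm_num)
        (div_nonneg (mul_nonneg (ht i).le (ht j).le) hεS.le))]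
    rcases min_cases (t i) (t j) with ⟨hm, _⟩ | ⟨hm, _⟩ <;> rw [hm]
    · have : t i * t j / (ε + S) ≤ t i := by
        rw [div_le_iff₀ hεS]
        nlinarith [htle j, (ht i).le]
      linarith
    · have : t i * t j / (ε + S) ≤ t j := by
        rw [div_le_iff₀ hεS]
        nlinarith [htle i, (ht j).le]
      linarith
end

section
/- Let n ≥ 3 be a natural number and L > 0. The function t ↦ (∏_{i=1}^{n-1} t_i^{-1/2}) · t_n^{-3/2} is Lebesgue integrable on the ordered simplex {t ∈ ℝⁿ : 0 < t₁ ≤ t₂ ≤ ⋯ ≤ t_n ≤ L}. (Equivalently, the integral ∫_{ε ≤ t₁ ≤ ⋯ ≤ t_n ≤ L} (∏_{i=1}^{n-1} t_i^{-1/2}) t_n^{-3/2} dt₁⋯dt_n converges as ε → 0 for n ≥ 3.) -/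
open MeasureTheory Set Real

/-- For `n ≥ 3`, the function `t ↦ (∏_{i<n-1} tᵢ^{-1/2}) · t_{n-1}^{-3/2}` is Lebesgue
integrable on the ordered simplex `{0 < t₀ ≤ t₁ ≤ ⋯ ≤ t_{n-1} ≤ L}`. -/
theorem integrable_wheel_time_integral (n : ℕ) (hn : 3 ≤ n) (L : ℝ) (hL : 0 < L) :
    IntegrableOn
      (fun t : Fin n → ℝ =>
        (∏ i ∈ Finset.univ.erase (⟨n - 1, by omega⟩ : Fin n), t i ^ (-(1 : ℝ) / 2)) *
          t (⟨n - 1, by omega⟩ : Fin n) ^ (-(3 : ℝ) / 2))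
      {t : Fin n → ℝ | 0 < t (⟨0, by omega⟩ : Fin n) ∧ (∀ i j, i ≤ j → t i ≤ t j) ∧
        t (⟨n - 1, by omega⟩ : Fin n) ≤ L} := by
  set l : Fin n := ⟨n - 1, by omega⟩ with hl
  set c : ℝ := -((n : ℝ) + 2) / (2 * n) with hcdef
  have hnR : (3 : ℝ) ≤ (n : ℝ) := by exact_mod_cast hn
  have hnpos : (0 : ℝ) < n := by linarith
  have hnne : (n : ℝ) ≠ 0 := ne_of_gt hnpos
  have hc : -1 < c := by
    rw [hcdef, neg_div, neg_lt_neg_iff, div_lt_one (by positivity)]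
    linarith
  -- the single-variable integrable dominating function
  have h1 : IntegrableOn (fun x : ℝ => x ^ c) (Ioc 0 L) := by
    have := intervalIntegral.intervalIntegrable_rpow' (a := 0) (b := L) hc
    rwa [intervalIntegrable_iff_integrableOn_Ioc_of_le hL.le] at this
  have hgind : Integrable fun x : ℝ => (Ioc (0:ℝ) L).indicator (fun x => x ^ c) x :=
    (integrable_indicator_iff measurableSet_Ioc).2 h1
  have hG : Integrable fun t : Fin n → ℝ =>
      ∏ i, (Ioc (0:ℝ) L).indicator (fun x => x ^ c) (t i) :=
    Integrable.fintype_prod (fun _ => hgind)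
  -- measurability of the set
  have hS : MeasurableSet {t : Fin n → ℝ | 0 < t (⟨0, by omega⟩ : Fin n) ∧
      (∀ i j, i ≤ j → t i ≤ t j) ∧ t l ≤ L} := by
    apply MeasurableSet.inter
    · exact measurableSet_lt measurable_const (measurable_pi_apply _)
    apply MeasurableSet.inter
    · show MeasurableSet {t : Fin n → ℝ | ∀ i j, i ≤ j → t i ≤ t j}
      rw [Set.setOf_forall]
      refine MeasurableSet.iInter fun i => ?_
      rw [Set.setOf_forall]
      refine MeasurableSet.iInter fun j => ?_
      by_cases h : i ≤ j
      · simp only [h, forall_true_left]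
        exact measurableSet_le (measurable_pi_apply i) (measurable_pi_apply j)
      · simp only [h, IsEmpty.forall_iff, setOf_true]
        exact MeasurableSet.univ
    · exact measurableSet_le (measurable_pi_apply _) measurable_const
  apply Integrable.mono' hG.integrableOn
  · apply Measurable.aestronglyMeasurable
    apply Measurable.mul
    · exact Finset.measurable_prod _ fun i _ => (measurable_pi_apply i).pow_const _
    · exact (measurable_pi_apply l).pow_const _
  rw [ae_restrict_iff' hS]
  refine Filter.Eventually.of_forall fun t ht => ?_
  obtain ⟨h0, hmono, hLe⟩ := ht
  have hpos : ∀ i, 0 < t i := fun i =>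
    lt_of_lt_of_le h0 (hmono _ i (by simp [Fin.le_def]))
  have hil : ∀ i : Fin n, t i ≤ t l := fun i => hmono i l (Fin.le_def.2 (by show i.val ≤ n - 1; have := i.isLt; omega))
  have hmem : ∀ i, t i ∈ Ioc (0:ℝ) L := fun i => ⟨hpos i, le_trans (hil i) hLe⟩
  have hGval : (∏ i, (Ioc (0:ℝ) L).indicator (fun x => x ^ c) (t i)) = ∏ i, t i ^ c := by
    exact Finset.prod_congr rfl fun i _ => indicator_of_mem (hmem i) _
  rw [hGval]
  have hfnn : 0 ≤ (∏ i ∈ Finset.univ.erase l, t i ^ (-(1 : ℝ) / 2)) * t l ^ (-(3 : ℝ) / 2) :=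
    mul_nonneg (Finset.prod_nonneg fun i _ => rpow_nonneg (hpos i).le _)
      (rpow_nonneg (hpos l).le _)
  rw [Real.norm_eq_abs, abs_of_nonneg hfnn]
  -- key exponent splittings
  have e1 : ∀ i, t i ^ (-(1:ℝ)/2) = t i ^ c * t i ^ ((1:ℝ)/n) := by
    intro i
    rw [← Real.rpow_add (hpos i)]
    congr 1
    rw [hcdef]; field_simp; ring
  have e2 : t l ^ (-(3:ℝ)/2) = t l ^ c * t l ^ (-(((n:ℝ) - 1)/n)) := by
    rw [← Real.rpow_add (hpos l)]
    congr 1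
    rw [hcdef]; field_simp; ring
  calc (∏ i ∈ Finset.univ.erase l, t i ^ (-(1 : ℝ) / 2)) * t l ^ (-(3 : ℝ) / 2)
      = ((∏ i ∈ Finset.univ.erase l, t i ^ c) * ∏ i ∈ Finset.univ.erase l, t i ^ ((1:ℝ)/n))
        * (t l ^ c * t l ^ (-(((n:ℝ) - 1)/n))) := by
        rw [e2, ← Finset.prod_mul_distrib]
        congr 1
        exact Finset.prod_congr rfl fun i _ => e1 i
    _ ≤ ((∏ i ∈ Finset.univ.erase l, t i ^ c) * t l ^ (((n:ℝ) - 1)/n))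
        * (t l ^ c * t l ^ (-(((n:ℝ) - 1)/n))) := by
        apply mul_le_mul_of_nonneg_right _ (mul_nonneg (rpow_nonneg (hpos l).le _)
          (rpow_nonneg (hpos l).le _))
        apply mul_le_mul_of_nonneg_left _ (Finset.prod_nonneg fun i _ =>
          rpow_nonneg (hpos i).le _)
        calc ∏ i ∈ Finset.univ.erase l, t i ^ ((1:ℝ)/n)
            ≤ ∏ _i ∈ Finset.univ.erase l, t l ^ ((1:ℝ)/n) :=
              Finset.prod_le_prod (fun i _ => rpow_nonneg (hpos i).le _)
                (fun i _ => Real.rpow_le_rpow (hpos i).le (hil i) (by positivity))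
          _ = (t l ^ ((1:ℝ)/n)) ^ (n - 1 : ℕ) := by
              rw [Finset.prod_const, Finset.card_erase_of_mem (Finset.mem_univ l),
                Finset.card_univ, Fintype.card_fin]
          _ = t l ^ (((n:ℝ) - 1)/n) := by
              rw [← Real.rpow_natCast (t l ^ ((1:ℝ)/n)), ← Real.rpow_mul (hpos l).le]
              congr 1
              have : ((n - 1 : ℕ) : ℝ) = (n : ℝ) - 1 := by
                push_cast [Nat.cast_sub (by omega : 1 ≤ n)]; ring
              rw [this]; field_simp
    _ = (∏ i ∈ Finset.univ.erase l, t i ^ c) * t l ^ c := by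
        have hone : t l ^ (((n:ℝ) - 1)/n) * t l ^ (-(((n:ℝ) - 1)/n)) = 1 := by
          rw [← Real.rpow_add (hpos l), add_neg_cancel, Real.rpow_zero]
        linear_combination (∏ i ∈ Finset.univ.erase l, t i ^ c) * t l ^ c * hone
    _ = ∏ i, t i ^ c := Finset.prod_erase_mul _ _ (Finset.mem_univ l)
end

section
/- Fix n ≥ 1, and let P := MvPolynomial (Fin n) ℂ ⊗[ℂ] ExteriorAlgebra ℂ (Fin n → ℂ). Let Δ : P →ₗ[ℂ] P be the 'BV Laplacian' Δ = ∑_{i} (∂/∂xᵢ) ⊗ ι(eᵢ*), where ∂/∂xᵢ is the i-th partial derivative on polynomials (MvPolynomial.pderiv i) and ι(eᵢ*) is left contraction of the exterior algebra with the i-th coordinate functional eᵢ* (the dual of the i-th standard basis vector e_i of ℂⁿ). Then: (1) Δ ∘ Δ = 0; (2) the kernel of Δ equals the span of the single element 1 ⊗ (e₁ ∧ e₂ ∧ ⋯ ∧ e_n) together with the range of Δ, i.e. ker Δ = range Δ ⊔ ℂ·(1 ⊗ e₁∧⋯∧e_n); and (3) 1 ⊗ (e₁∧⋯∧e_n) does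 not lie in the range of Δ. Consequently the cohomology ker Δ / im Δ is one-dimensional, spanned by the class of the top exterior monomial 1 ⊗ e₁∧⋯∧e_n. -/
set_option maxHeartbeats 1000000
set_option synthInstance.maxHeartbeats 400000


open TensorProduct

/-- The BV Laplacian `Δ = ∑ᵢ (∂/∂xᵢ) ⊗ ι(eᵢ*)` on
`ℂ[x₁,…,xₙ] ⊗ Λ*(ℂⁿ)`, where `∂/∂xᵢ` is the `i`-th partial derivative on polynomials and
`ι(eᵢ*)` is left contraction of the exterior algebra by the `i`-th coordinate functional. -/
noncomputable def bvLaplacian (n : ℕ) :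
    (MvPolynomial (Fin n) ℂ ⊗[ℂ] ExteriorAlgebra ℂ (Fin n → ℂ)) →ₗ[ℂ]
      (MvPolynomial (Fin n) ℂ ⊗[ℂ] ExteriorAlgebra ℂ (Fin n → ℂ)) :=
  ∑ i : Fin n,
    TensorProduct.map (MvPolynomial.pderiv (R := ℂ) i).toLinearMap
      (CliffordAlgebra.contractLeft (Q := (0 : QuadraticForm ℂ (Fin n → ℂ)))
        (LinearMap.proj i))

/-- The top exterior monomial `e₁ ∧ e₂ ∧ ⋯ ∧ eₙ` in `Λ*(ℂⁿ)`. -/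
noncomputable def topExteriorMonomial (n : ℕ) : ExteriorAlgebra ℂ (Fin n → ℂ) :=
  (List.ofFn fun i : Fin n => ExteriorAlgebra.ι ℂ (Pi.single i (1 : ℂ))).prod

namespace BVAux


variable {n : ℕ}

/-- the `i`-th standard basis vector in the exterior algebra. -/
noncomputable def eV (n : ℕ) (i : Fin n) : ExteriorAlgebra ℂ (Fin n → ℂ) :=
  ExteriorAlgebra.ι ℂ (Pi.single i 1)

/-- contraction by the `i`-th coordinate functional. -/
noncomputable def ιc (n : ℕ) (i : Fin n) :
    ExteriorAlgebra ℂ (Fin n → ℂ) →ₗ[ℂ] ExteriorAlgebra ℂ (Fin n → ℂ) :=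
  CliffordAlgebra.contractLeft (Q := (0 : QuadraticForm ℂ (Fin n → ℂ))) (LinearMap.proj i)

/-- wedge monomial of a list. -/
noncomputable def w (n : ℕ) (L : List (Fin n)) : ExteriorAlgebra ℂ (Fin n → ℂ) :=
  (L.map (eV n)).prod

@[simp] lemma w_nil : w n [] = 1 := rfl

@[simp] lemma w_cons (i : Fin n) (L : List (Fin n)) : w n (i :: L) = eV n i * w n L := by
  simp [w, List.prod_cons]

lemma ιc_e_mul (i j : Fin n) (x : ExteriorAlgebra ℂ (Fin n → ℂ)) :
    ιc n i (eV n j * x) = (Pi.single (M := fun _ : Fin n => ℂ) j 1 i) • x - eV n j * ιc n i x :=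
  CliffordAlgebra.contractLeft_ι_mul _ _ _

@[simp] lemma ιc_one (i : Fin n) : ιc n i 1 = 0 :=
  CliffordAlgebra.contractLeft_one _ _

lemma ιc_w_of_not_mem {i : Fin n} : ∀ {L : List (Fin n)}, i ∉ L → ιc n i (w n L) = 0
  | [], _ => by simp
  | j :: L, h => by
    have hji : j ≠ i := fun e => h (e ▸ List.mem_cons_self)
    have hiL : i ∉ L := fun e => h (List.mem_cons_of_mem _ e)
    rw [w_cons, ιc_e_mul, Pi.single_eq_of_ne hji.symm, ιc_w_of_not_mem hiL]
    simp

lemma e_mul_e_swap (i j : Fin n) : eV n i * eV n j = -(eV n j * eV n i) := by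
  have := ExteriorAlgebra.ι_add_mul_swap (R := ℂ) (Pi.single i 1 : Fin n → ℂ) (Pi.single j 1)
  rw [eq_neg_iff_add_eq_zero]
  exact this

@[simp] lemma e_mul_e_self (i : Fin n) : eV n i * eV n i = 0 :=
  ExteriorAlgebra.ι_sq_zero _

lemma e_mul_w_of_mem {i : Fin n} : ∀ {L : List (Fin n)}, i ∈ L → eV n i * w n L = 0
  | j :: L, h => by
    rcases eq_or_ne i j with rfl | hij
    · rw [w_cons, ← mul_assoc, e_mul_e_self, zero_mul]
    · have hiL : i ∈ L := (List.mem_cons.1 h).resolve_left hij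
      rw [w_cons, ← mul_assoc, e_mul_e_swap, neg_mul, mul_assoc,
        e_mul_w_of_mem hiL, mul_zero, neg_zero]

lemma ιc_w_of_mem {i : Fin n} : ∀ {L : List (Fin n)}, L.Nodup → i ∈ L →
    ∃ c : ℂ, c ≠ 0 ∧ ιc n i (w n L) = c • w n (L.erase i)
  | j :: L, hnd, h => by
    rcases eq_or_ne i j with rfl | hij
    · refine ⟨1, one_ne_zero, ?_⟩
      have hiL : i ∉ L := (List.nodup_cons.1 hnd).1
      rw [w_cons, ιc_e_mul, Pi.single_eq_same, ιc_w_of_not_mem hiL, mul_zero, sub_zero,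
        List.erase_cons_head]
    · have hiL : i ∈ L := (List.mem_cons.1 h).resolve_left hij
      obtain ⟨c, hc, hrec⟩ := ιc_w_of_mem (List.nodup_cons.1 hnd).2 hiL
      refine ⟨-c, neg_ne_zero.2 hc, ?_⟩
      rw [w_cons, ιc_e_mul, Pi.single_eq_of_ne hij, hrec,
        List.erase_cons_tail (by simpa using (Ne.symm hij)), w_cons]
      simp [mul_smul_comm]

lemma algebraMapInv_w {L : List (Fin n)} (h : L ≠ []) :
    ExteriorAlgebra.algebraMapInv (w n L) = 0 := by
  cases L with
  | nil => exact absurd rfl h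
  | cons i L =>
    rw [w_cons, map_mul]
    have : ExteriorAlgebra.algebraMapInv (eV n i) = 0 := by
      simp [eV, ExteriorAlgebra.algebraMapInv]
    rw [this, zero_mul]


/-- iterated contraction, head first -/
noncomputable def ctr (n : ℕ) : List (Fin n) →
    (ExteriorAlgebra ℂ (Fin n → ℂ) →ₗ[ℂ] ExteriorAlgebra ℂ (Fin n → ℂ))
  | [] => LinearMap.id
  | i :: L => (ctr n L) ∘ₗ ιc n i

@[simp] lemma ctr_nil (x : ExteriorAlgebra ℂ (Fin n → ℂ)) : ctr n [] x = x := rfl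

@[simp] lemma ctr_cons (i : Fin n) (L : List (Fin n)) (x : ExteriorAlgebra ℂ (Fin n → ℂ)) :
    ctr n (i :: L) x = ctr n L (ιc n i x) := rfl

lemma ctr_w_self : ∀ {L : List (Fin n)}, L.Nodup → ctr n L (w n L) = 1
  | [], _ => rfl
  | i :: L, hnd => by
    rw [ctr_cons, w_cons, ιc_e_mul, Pi.single_eq_same,
      ιc_w_of_not_mem (List.nodup_cons.1 hnd).1, mul_zero, sub_zero, one_smul]
    exact ctr_w_self (List.nodup_cons.1 hnd).2

lemma ctr_w (L : List (Fin n)) : ∀ (M : List (Fin n)), M.Nodup →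
    ctr n L (w n M) = 0 ∨
    (L.toFinset ⊆ M.toFinset ∧ ∃ (c : ℂ) (M' : List (Fin n)), c ≠ 0 ∧ M'.Nodup ∧
      M'.toFinset = M.toFinset \ L.toFinset ∧ ctr n L (w n M) = c • w n M') := by
  induction L with
  | nil =>
    intro M hM
    exact Or.inr ⟨by simp, 1, M, one_ne_zero, hM, by simp, by simp⟩
  | cons i L ih =>
    intro M hM
    by_cases hiM : i ∈ M
    · obtain ⟨c, hc, hrec⟩ := ιc_w_of_mem hM hiM
      rw [ctr_cons, hrec, map_smul]
      rcases ih (M.erase i) (hM.erase i) with h0 | ⟨hsub, c', M', hc', hnd', hset, heq⟩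
      · rw [h0, smul_zero]; exact Or.inl rfl
      · refine Or.inr ⟨?_, c * c', M', mul_ne_zero hc hc', hnd', ?_, ?_⟩
        · intro a ha
          simp only [List.toFinset_cons, Finset.mem_insert] at ha
          rcases ha with rfl | ha
          · exact List.mem_toFinset.2 hiM
          · exact List.mem_toFinset.2 (List.mem_of_mem_erase (List.mem_toFinset.1 (hsub ha)))
        · rw [hset]
          ext a
          simp only [Finset.mem_sdiff, List.mem_toFinset, List.toFinset_cons,
            Finset.mem_insert, hM.mem_erase_iff]
          tauto
        · rw [heq, smul_smul]
    · rw [ctr_cons, ιc_w_of_not_mem (fun h => hiM h), map_zero]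
      exact Or.inl rfl


/-- wedge monomial of a finset. -/
noncomputable def wedge (n : ℕ) (S : Finset (Fin n)) : ExteriorAlgebra ℂ (Fin n → ℂ) :=
  w n (S.sort (· ≤ ·))

/-- dual functional to `wedge`. -/
noncomputable def lam (n : ℕ) (S : Finset (Fin n)) :
    Module.Dual ℂ (ExteriorAlgebra ℂ (Fin n → ℂ)) :=
  (ExteriorAlgebra.algebraMapInv (R := ℂ) (M := Fin n → ℂ)).toLinearMap ∘ₗ
    ctr n (S.sort (· ≤ ·))

lemma lam_wedge_same (S : Finset (Fin n)) : lam n S (wedge n S) = 1 := by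
  rw [lam, LinearMap.comp_apply, wedge, ctr_w_self (S.sort_nodup _),
    AlgHom.toLinearMap_apply, map_one]

lemma lam_wedge_of_ne {S T : Finset (Fin n)} (h : S ≠ T) : lam n S (wedge n T) = 0 := by
  rw [lam, LinearMap.comp_apply, wedge]
  rcases ctr_w (S.sort (· ≤ ·)) (T.sort (· ≤ ·)) (T.sort_nodup _)
    with h0 | ⟨hsub, c, M', hc, hnd, hset, heq⟩
  · rw [h0, map_zero]
  · rw [Finset.sort_toFinset, Finset.sort_toFinset] at hsub hset
    have hTS : T \ S ≠ ∅ := by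
      intro hempty
      exact h (Finset.Subset.antisymm hsub (Finset.sdiff_eq_empty_iff_subset.1 hempty))
    have hM' : M' ≠ [] := by
      intro hnil
      rw [hnil] at hset
      exact hTS (by simpa using hset.symm)
    rw [heq, map_smul, AlgHom.toLinearMap_apply, algebraMapInv_w hM', smul_zero]

lemma sorted_recover {l : List (Fin n)} (hs : List.Pairwise (· < ·) l) :
    wedge n l.toFinset = w n l := by
  rw [wedge]
  congr 1
  refine List.Perm.eq_of_pairwise' (Finset.pairwise_sort _ _) ?_
    (List.perm_of_nodup_nodup_toFinset_eq (Finset.sort_nodup _ _) hs.nodup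
      (by rw [Finset.sort_toFinset]))
  exact hs.imp le_of_lt

lemma e_mul_w_insert {i : Fin n} : ∀ {l : List (Fin n)}, List.Pairwise (· < ·) l → i ∉ l →
    ∃ (c : ℂ) (l' : List (Fin n)), c ≠ 0 ∧ List.Pairwise (· < ·) l' ∧
      l'.toFinset = insert i l.toFinset ∧ eV n i * w n l = c • w n l'
  | [], _, _ => ⟨1, [i], one_ne_zero, List.pairwise_singleton _ i, by simp, by simp⟩
  | j :: t, hs, hmem => by
    have hij : i ≠ j := fun e => hmem (e ▸ List.mem_cons_self)
    rcases lt_or_gt_of_ne hij with hlt | hgt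
    · refine ⟨1, i :: j :: t, one_ne_zero, ?_, by simp, by simp⟩
      exact List.pairwise_cons.2 ⟨fun b hb => by
        rcases List.mem_cons.1 hb with rfl | hb
        · exact hlt
        · exact hlt.trans ((List.pairwise_cons.1 hs).1 b hb), hs⟩
    · have hit : i ∉ t := fun e => hmem (List.mem_cons_of_mem _ e)
      obtain ⟨c, t', hc, hs', hset, heq⟩ :=
        e_mul_w_insert (List.pairwise_cons.1 hs).2 hit
      refine ⟨-c, j :: t', neg_ne_zero.2 hc, ?_, ?_, ?_⟩
      · refine List.pairwise_cons.2 ⟨fun b hb => ?_, hs'⟩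
        have : b ∈ t'.toFinset := List.mem_toFinset.2 hb
        rw [hset, Finset.mem_insert] at this
        rcases this with rfl | hbt
        · exact hgt
        · exact (List.pairwise_cons.1 hs).1 b (List.mem_toFinset.1 hbt)
      · simp only [List.toFinset_cons, hset]
        rw [Finset.insert_comm]
      · rw [w_cons, w_cons, ← mul_assoc, e_mul_e_swap, neg_mul, mul_assoc, heq,
          mul_smul_comm, neg_smul]

/-- span of wedge monomials. -/
noncomputable def Pw (n : ℕ) : Submodule ℂ (ExteriorAlgebra ℂ (Fin n → ℂ)) :=
  Submodule.span ℂ (Set.range (wedge n))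

lemma e_mul_mem {i : Fin n} {x : ExteriorAlgebra ℂ (Fin n → ℂ)} (hx : x ∈ Pw n) :
    eV n i * x ∈ Pw n := by
  induction hx using Submodule.span_induction with
  | mem x hx =>
    obtain ⟨S, rfl⟩ := hx
    by_cases hiS : i ∈ S
    · rw [wedge, e_mul_w_of_mem (Finset.mem_sort (· ≤ ·) |>.2 hiS)]
      exact (Pw n).zero_mem
    · obtain ⟨c, l', hc, hs', hset, heq⟩ := e_mul_w_insert (((S.pairwise_sort (· ≤ ·)).and (S.sort_nodup (· ≤ ·))).imp fun h => lt_of_le_of_ne h.1 h.2)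
        (fun h => hiS (Finset.mem_sort (· ≤ ·) |>.1 h))
      rw [wedge, heq, ← sorted_recover hs']
      exact Submodule.smul_mem _ _ (Submodule.subset_span ⟨l'.toFinset, rfl⟩)
  | zero => rw [mul_zero]; exact (Pw n).zero_mem
  | add x y _ _ hx hy => rw [mul_add]; exact (Pw n).add_mem hx hy
  | smul c x _ hx => rw [mul_smul_comm]; exact (Pw n).smul_mem c hx

lemma w_mem (l : List (Fin n)) : w n l ∈ Pw n := by
  induction l with
  | nil =>
    have : (1 : ExteriorAlgebra ℂ (Fin n → ℂ)) = wedge n ∅ := by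
      rw [wedge, Finset.sort_empty]; rfl
    rw [w_nil, this]
    exact Submodule.subset_span ⟨∅, rfl⟩
  | cons i t ih => rw [w_cons]; exact e_mul_mem ih

lemma w_mul_mem (l : List (Fin n)) {y : ExteriorAlgebra ℂ (Fin n → ℂ)} (hy : y ∈ Pw n) :
    w n l * y ∈ Pw n := by
  induction l with
  | nil => rw [w_nil, one_mul]; exact hy
  | cons i t ih => rw [w_cons, mul_assoc]; exact e_mul_mem ih

lemma Pw_eq_top : Pw n = ⊤ := by
  rw [Submodule.eq_top_iff']
  intro x
  induction x using ExteriorAlgebra.induction with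
  | algebraMap r =>
    rw [Algebra.algebraMap_eq_smul_one]
    exact Submodule.smul_mem _ _ (w_mem [])
  | ι m =>
    have hm : m = ∑ i : Fin n, m i • (Pi.single i 1 : Fin n → ℂ) := by
      ext j
      simp [Pi.single_apply, Finset.sum_ite_eq']
    rw [hm, map_sum]
    refine Submodule.sum_mem _ fun i _ => ?_
    rw [map_smul]
    refine Submodule.smul_mem _ _ ?_
    have : ExteriorAlgebra.ι ℂ (Pi.single i 1 : Fin n → ℂ) = w n [i] := by simp [eV]
    rw [this]
    exact w_mem [i]
  | mul x y hx hy =>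
    induction hx using Submodule.span_induction with
    | mem x hx =>
      obtain ⟨S, rfl⟩ := hx
      exact w_mul_mem _ hy
    | zero => rw [zero_mul]; exact (Pw n).zero_mem
    | add a b _ _ ha hb => rw [add_mul]; exact (Pw n).add_mem ha hb
    | smul c a _ ha => rw [smul_mul_assoc]; exact (Pw n).smul_mem c ha
  | add x y hx hy => exact (Pw n).add_mem hx hy

lemma lam_total {x : ExteriorAlgebra ℂ (Fin n → ℂ)} (h : ∀ S, lam n S x = 0) : x = 0 := by
  have hx : x ∈ Pw n := Pw_eq_top ▸ Submodule.mem_top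
  rw [Pw, Submodule.mem_span_range_iff_exists_fun] at hx
  obtain ⟨f, rfl⟩ := hx
  have hf : ∀ T, f T = 0 := by
    intro T
    have := h T
    rw [map_sum] at this
    simp only [map_smul] at this
    rw [Finset.sum_eq_single T (fun S _ hS => by rw [lam_wedge_of_ne (Ne.symm hS), smul_eq_mul, mul_zero])
      (fun h => absurd (Finset.mem_univ T) h)] at this
    rwa [lam_wedge_same, smul_eq_mul, mul_one] at this
  rw [Finset.sum_congr rfl fun T _ => by rw [hf T, zero_smul]]
  exact Finset.sum_const_zero

/-- the wedge monomials form a basis of the exterior algebra. -/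
noncomputable def bW (n : ℕ) : Module.Basis (Finset (Fin n)) ℂ (ExteriorAlgebra ℂ (Fin n → ℂ)) :=
  Module.DualBases.basis (e := wedge n) (ε := lam n)
    ⟨lam_wedge_same, fun _ _ h => lam_wedge_of_ne h,
      fun h => sub_eq_zero.1 (lam_total fun S => by rw [map_sub, h S, sub_self]), fun _ => Set.toFinite _⟩

lemma bW_apply (S : Finset (Fin n)) : bW n S = wedge n S := by
  simp [bW]


open MvPolynomial in
lemma pderiv_comm' (i j : Fin n) (p : MvPolynomial (Fin n) ℂ) :
    pderiv i (pderiv j p) = pderiv j (pderiv i p) := by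
  rcases eq_or_ne i j with rfl | hij
  · rfl
  · induction p using MvPolynomial.induction_on' with
    | monomial a c =>
      rw [pderiv_monomial, pderiv_monomial, pderiv_monomial, pderiv_monomial]
      have h1 : (a - Finsupp.single j 1 : Fin n →₀ ℕ) i = a i := by
        rw [Finsupp.tsub_apply, Finsupp.single_eq_of_ne' (Ne.symm hij), Nat.sub_zero]
      have h2 : (a - Finsupp.single i 1 : Fin n →₀ ℕ) j = a j := by
        rw [Finsupp.tsub_apply, Finsupp.single_eq_of_ne' hij, Nat.sub_zero]
      have h3 : a - Finsupp.single j 1 - Finsupp.single i 1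
          = a - Finsupp.single i 1 - Finsupp.single j 1 := by
        ext k
        simp only [Finsupp.tsub_apply]
        omega
      rw [h1, h2, h3]
      ring_nf
    | add p q hp hq => simp [map_add, hp, hq]


open MvPolynomial

/-- homotopy operator `h = ∑ᵢ xᵢ ⊗ εᵢ`. -/
noncomputable def hh (n : ℕ) :
    (MvPolynomial (Fin n) ℂ ⊗[ℂ] ExteriorAlgebra ℂ (Fin n → ℂ)) →ₗ[ℂ]
      (MvPolynomial (Fin n) ℂ ⊗[ℂ] ExteriorAlgebra ℂ (Fin n → ℂ)) :=
  ∑ i : Fin n,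
    TensorProduct.map (LinearMap.mulLeft ℂ (X i)) (LinearMap.mulLeft ℂ (eV n i))

/-- the `number operator`. -/
noncomputable def NN (n : ℕ) :
    (MvPolynomial (Fin n) ℂ ⊗[ℂ] ExteriorAlgebra ℂ (Fin n → ℂ)) →ₗ[ℂ]
      (MvPolynomial (Fin n) ℂ ⊗[ℂ] ExteriorAlgebra ℂ (Fin n → ℂ)) :=
  bvLaplacian n ∘ₗ hh n + hh n ∘ₗ bvLaplacian n

lemma delta_tmul (p : MvPolynomial (Fin n) ℂ) (x : ExteriorAlgebra ℂ (Fin n → ℂ)) :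
    bvLaplacian n (p ⊗ₜ[ℂ] x) = ∑ i : Fin n, (pderiv i p) ⊗ₜ[ℂ] (ιc n i x) := by
  rw [bvLaplacian, LinearMap.sum_apply]
  rfl

lemma hh_tmul (p : MvPolynomial (Fin n) ℂ) (x : ExteriorAlgebra ℂ (Fin n → ℂ)) :
    hh n (p ⊗ₜ[ℂ] x) = ∑ i : Fin n, (X i * p) ⊗ₜ[ℂ] (eV n i * x) := by
  rw [hh, LinearMap.sum_apply]
  rfl

lemma delta_sq : (bvLaplacian n) ∘ₗ (bvLaplacian n) = 0 := by
  apply TensorProduct.ext'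
  intro p x
  rw [LinearMap.comp_apply, delta_tmul, map_sum]
  simp_rw [delta_tmul]
  set F : Fin n → Fin n → (MvPolynomial (Fin n) ℂ ⊗[ℂ] ExteriorAlgebra ℂ (Fin n → ℂ)) :=
    fun i j => (pderiv j (pderiv i p)) ⊗ₜ[ℂ] (ιc n j (ιc n i x)) with hF
  have hanti : ∀ i j, F i j = - F j i := by
    intro i j
    rw [hF]
    simp only
    rw [pderiv_comm' j i]
    have : ιc n j (ιc n i x) = -(ιc n i (ιc n j x)) :=
      CliffordAlgebra.contractLeft_comm _ _ _
    rw [this, TensorProduct.tmul_neg]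
  have hs : (∑ i : Fin n, ∑ j : Fin n, F i j) = -(∑ i : Fin n, ∑ j : Fin n, F i j) := by
    nth_rewrite 1 [Finset.sum_comm]
    rw [← Finset.sum_neg_distrib]
    refine Finset.sum_congr rfl fun j _ => ?_
    rw [← Finset.sum_neg_distrib]
    exact Finset.sum_congr rfl fun i _ => hanti i j
  have h2 : (2 : ℂ) • (∑ i : Fin n, ∑ j : Fin n, F i j) = 0 := by
    rw [two_smul]
    nth_rewrite 1 [hs]
    rw [neg_add_cancel]
  have h3 : (∑ i : Fin n, ∑ j : Fin n, F i j)
      = (2 : ℂ)⁻¹ • ((2 : ℂ) • ∑ i : Fin n, ∑ j : Fin n, F i j) := by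
    rw [smul_smul]; norm_num
  rw [h2, smul_zero] at h3
  simpa [LinearMap.zero_apply] using h3

lemma term_eq (i j : Fin n) (p : MvPolynomial (Fin n) ℂ) (x : ExteriorAlgebra ℂ (Fin n → ℂ)) :
    (pderiv i (X j * p)) ⊗ₜ[ℂ] (ιc n i (eV n j * x))
      + (X j * pderiv i p) ⊗ₜ[ℂ] (eV n j * ιc n i x)
    = if i = j then ((X i * pderiv i p) ⊗ₜ[ℂ] x + p ⊗ₜ[ℂ] (ιc n i (eV n i * x))) else 0 := by
  rcases eq_or_ne i j with rfl | hij
  · rw [if_pos rfl]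
    have hd : pderiv i (X i * p) = p + X i * pderiv i p := by
      rw [pderiv_mul, pderiv_X_self, one_mul]
    have he : ιc n i (eV n i * x) = x - eV n i * ιc n i x := by
      rw [ιc_e_mul, Pi.single_eq_same, one_smul]
    rw [hd, he]
    rw [TensorProduct.add_tmul, TensorProduct.tmul_sub, TensorProduct.tmul_sub]
    abel
  · rw [if_neg hij]
    have hd : pderiv i (X j * p) = X j * pderiv i p := by
      rw [pderiv_mul, pderiv_X_of_ne (Ne.symm hij), zero_mul, zero_add]
    have he : ιc n i (eV n j * x) = -(eV n j * ιc n i x) := by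
      rw [ιc_e_mul, Pi.single_eq_of_ne hij, zero_smul, zero_sub]
    rw [hd, he, TensorProduct.tmul_neg, neg_add_cancel]

lemma NN_tmul (p : MvPolynomial (Fin n) ℂ) (x : ExteriorAlgebra ℂ (Fin n → ℂ)) :
    NN n (p ⊗ₜ[ℂ] x)
      = (∑ i : Fin n, X i * pderiv i p) ⊗ₜ[ℂ] x
        + p ⊗ₜ[ℂ] (∑ i : Fin n, ιc n i (eV n i * x)) := by
  rw [NN, LinearMap.add_apply, LinearMap.comp_apply, LinearMap.comp_apply,
    delta_tmul, hh_tmul, map_sum, map_sum]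
  simp_rw [delta_tmul, hh_tmul]
  rw [Finset.sum_comm, ← Finset.sum_add_distrib]
  simp_rw [← Finset.sum_add_distrib, term_eq, Finset.sum_ite_eq, Finset.mem_univ, if_pos]
  rw [Finset.sum_add_distrib, TensorProduct.sum_tmul, TensorProduct.tmul_sum]


lemma poly_eigen_term (a : Fin n →₀ ℕ) (i : Fin n) :
    X i * pderiv i (monomial a (1:ℂ)) = ((a i : ℕ) : ℂ) • monomial a 1 := by
  rw [pderiv_monomial, one_mul]
  by_cases h : a i = 0
  · rw [h]
    simp
  · have hsub : Finsupp.single i 1 + (a - Finsupp.single i 1) = a := by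
      ext k
      rcases eq_or_ne k i with rfl | hk
      · simp only [Finsupp.add_apply, Finsupp.tsub_apply, Finsupp.single_eq_same]
        omega
      · simp [Finsupp.single_eq_of_ne' (Ne.symm hk), Finsupp.tsub_apply]
    rw [X, monomial_mul, one_mul, hsub, smul_monomial, smul_eq_mul, mul_one]

lemma poly_eigen (a : Fin n →₀ ℕ) :
    ∑ i : Fin n, X i * pderiv i (monomial a (1:ℂ))
      = (((∑ i : Fin n, a i : ℕ)) : ℂ) • monomial a 1 := by
  rw [Finset.sum_congr rfl fun i _ => poly_eigen_term a i, ← Finset.sum_smul, Nat.cast_sum]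

lemma ext_eigen (S : Finset (Fin n)) :
    ∑ i : Fin n, ιc n i (eV n i * wedge n S)
      = (((n - S.card : ℕ)) : ℂ) • wedge n S := by
  have hterm : ∀ i : Fin n, ιc n i (eV n i * wedge n S)
      = if i ∈ S then 0 else wedge n S := by
    intro i
    by_cases hiS : i ∈ S
    · rw [if_pos hiS, wedge, e_mul_w_of_mem (Finset.mem_sort (· ≤ ·) |>.2 hiS), map_zero]
    · rw [if_neg hiS, ιc_e_mul, Pi.single_eq_same, one_smul, wedge,
        ιc_w_of_not_mem (fun h => hiS (Finset.mem_sort (· ≤ ·) |>.1 h)), mul_zero, sub_zero]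
  rw [Finset.sum_congr rfl fun i _ => hterm i, Finset.sum_ite, Finset.sum_const_zero,
    Finset.sum_const, zero_add]
  have hcard : (Finset.univ.filter (fun i => ¬ i ∈ S)).card = n - S.card := by
    have : Finset.univ.filter (fun i => ¬ i ∈ S) = Sᶜ := by
      ext a; simp
    rw [this, Finset.card_compl, Fintype.card_fin]
  rw [hcard, ← Nat.cast_smul_eq_nsmul ℂ]

/-- basis of the whole space. -/
noncomputable def bP (n : ℕ) :
    Module.Basis ((Fin n →₀ ℕ) × Finset (Fin n)) ℂ
      (MvPolynomial (Fin n) ℂ ⊗[ℂ] ExteriorAlgebra ℂ (Fin n → ℂ)) :=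
  (MvPolynomial.basisMonomials (Fin n) ℂ).tensorProduct (bW n)

lemma bP_apply (q : (Fin n →₀ ℕ) × Finset (Fin n)) :
    bP n q = (monomial q.1 (1:ℂ)) ⊗ₜ[ℂ] wedge n q.2 := by
  rw [bP, Module.Basis.tensorProduct_apply', coe_basisMonomials, bW_apply]

/-- the eigenvalue function. -/
def κv (n : ℕ) (q : (Fin n →₀ ℕ) × Finset (Fin n)) : ℕ :=
  (∑ i : Fin n, q.1 i) + (n - q.2.card)

lemma NN_basis (q : (Fin n →₀ ℕ) × Finset (Fin n)) :
    NN n (bP n q) = ((κv n q : ℕ) : ℂ) • bP n q := by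
  rw [bP_apply, NN_tmul, poly_eigen, ext_eigen, ← TensorProduct.smul_tmul',
    TensorProduct.tmul_smul, ← add_smul, κv, Nat.cast_add]

lemma κv_eq_zero {q : (Fin n →₀ ℕ) × Finset (Fin n)} (h : κv n q = 0) :
    q = (0, Finset.univ) := by
  rw [κv, Nat.add_eq_zero] at h
  obtain ⟨h1, h2⟩ := h
  have hq1 : q.1 = 0 := by
    ext i
    have := Finset.sum_eq_zero_iff.1 h1 i (Finset.mem_univ i)
    simpa using this
  have hq2 : q.2 = Finset.univ := by
    have hle : q.2.card ≤ n := by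
      simpa [Fintype.card_fin] using Finset.card_le_univ q.2
    have : q.2.card = n := by omega
    exact (Finset.card_eq_iff_eq_univ q.2).1 (by simpa [Fintype.card_fin] using this)
  exact Prod.ext hq1 hq2

lemma κv_univ_zero : κv n (0, Finset.univ) = 0 := by
  simp [κv, Fintype.card_fin]

lemma wedge_univ : wedge n Finset.univ = topExteriorMonomial n := by
  rw [wedge, topExteriorMonomial]
  have h1 : (List.ofFn fun i : Fin n => ExteriorAlgebra.ι ℂ (Pi.single i (1:ℂ)))
      = (List.finRange n).map (eV n) := by
    rw [List.ofFn_eq_map]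
    rfl
  rw [h1]
  show w n (Finset.univ.sort (· ≤ ·)) = w n (List.finRange n)
  congr 1
  refine List.Perm.eq_of_pairwise' (Finset.pairwise_sort _ _) ((List.pairwise_lt_finRange n).imp le_of_lt)
    (List.perm_of_nodup_nodup_toFinset_eq (Finset.sort_nodup _ _) (List.nodup_finRange n) ?_)
  · rw [Finset.sort_toFinset]
    ext a; simp

lemma bP_top : bP n (0, Finset.univ)
    = (1 : MvPolynomial (Fin n) ℂ) ⊗ₜ[ℂ] topExteriorMonomial n := by
  rw [bP_apply, wedge_univ]
  congr 1


lemma NN_apply (u : MvPolynomial (Fin n) ℂ ⊗[ℂ] ExteriorAlgebra ℂ (Fin n → ℂ)) :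
    NN n u = bvLaplacian n (hh n u) + hh n (bvLaplacian n u) := rfl

lemma delta_delta (x : MvPolynomial (Fin n) ℂ ⊗[ℂ] ExteriorAlgebra ℂ (Fin n → ℂ)) :
    bvLaplacian n (bvLaplacian n x) = 0 := by
  have := congrArg (fun f => f x) (delta_sq (n := n))
  simpa using this

lemma commute_delta_NN (x : MvPolynomial (Fin n) ℂ ⊗[ℂ] ExteriorAlgebra ℂ (Fin n → ℂ)) :
    bvLaplacian n (NN n x) = NN n (bvLaplacian n x) := by
  rw [NN_apply, NN_apply, map_add, delta_delta (hh n x), delta_delta x, map_zero,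
    zero_add, add_zero]

lemma commute_delta_pow (k : ℕ) (x : MvPolynomial (Fin n) ℂ ⊗[ℂ] ExteriorAlgebra ℂ (Fin n → ℂ)) :
    bvLaplacian n ((NN n ^ k) x) = (NN n ^ k) (bvLaplacian n x) := by
  induction k generalizing x with
  | zero => simp
  | succ k ih =>
    rw [pow_succ, Module.End.mul_apply, Module.End.mul_apply, ih (NN n x), commute_delta_NN]

lemma commute_delta_aeval (q : Polynomial ℂ)
    (x : MvPolynomial (Fin n) ℂ ⊗[ℂ] ExteriorAlgebra ℂ (Fin n → ℂ)) :
    bvLaplacian n ((Polynomial.aeval (NN n)) q x)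
      = (Polynomial.aeval (NN n)) q (bvLaplacian n x) := by
  induction q using Polynomial.induction_on' with
  | add p q hp hq => rw [map_add, LinearMap.add_apply, LinearMap.add_apply, map_add, hp, hq]
  | monomial k a =>
    rw [Polynomial.aeval_monomial, Module.End.mul_apply, Module.End.mul_apply,
      Module.algebraMap_end_apply, Module.algebraMap_end_apply, map_smul, commute_delta_pow]

lemma aeval_bP (qp : Polynomial ℂ) (idx : (Fin n →₀ ℕ) × Finset (Fin n)) :
    (Polynomial.aeval (NN n)) qp (bP n idx) = (qp.eval ((κv n idx : ℕ) : ℂ)) • bP n idx :=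
  Module.End.aeval_apply_of_hasEigenvector
    ⟨Module.End.mem_eigenspace_iff.2 (NN_basis idx), (bP n).ne_zero idx⟩

lemma key_decomp (v : MvPolynomial (Fin n) ℂ ⊗[ℂ] ExteriorAlgebra ℂ (Fin n → ℂ)) :
    ∃ (c : ℂ) (qp : Polynomial ℂ), c ≠ 0 ∧ qp.eval 0 = c ∧
      (Polynomial.aeval (NN n)) qp v ∈ Submodule.span ℂ {bP n (0, Finset.univ)} := by
  classical
  set m := (((bP n).repr v).support.sup (κv n)) with hm
  set qp := ∏ k ∈ Finset.range m, (Polynomial.X - Polynomial.C ((k+1 : ℕ) : ℂ)) with hqp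
  refine ⟨qp.eval 0, qp, ?_, rfl, ?_⟩
  · rw [hqp, Polynomial.eval_prod]
    refine Finset.prod_ne_zero_iff.2 fun k _ => ?_
    simp only [Polynomial.eval_sub, Polynomial.eval_X, Polynomial.eval_C, zero_sub, neg_ne_zero]
    intro hzero
    have h1 : (((k+1) : ℕ) : ℂ) = 0 := by push_cast; push_cast at hzero; exact hzero
    have := Nat.cast_eq_zero (R := ℂ).1 h1
    omega
  · have hv : v = (((bP n).repr v).sum fun idx c => c • bP n idx) := by
      rw [← Finsupp.linearCombination_apply, Module.Basis.linearCombination_repr]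
    nth_rewrite 1 [hv]
    rw [map_finsuppSum, Finsupp.sum]
    refine Submodule.sum_mem _ fun idx hidx => ?_
    rw [map_smul, aeval_bP]
    by_cases hκ : κv n idx = 0
    · have : idx = (0, Finset.univ) := κv_eq_zero hκ
      rw [this]
      exact Submodule.smul_mem _ _ (Submodule.smul_mem _ _
        (Submodule.mem_span_singleton_self _))
    · have hle : κv n idx ≤ m := Finset.le_sup hidx
      have heval : qp.eval ((κv n idx : ℕ) : ℂ) = 0 := by
        rw [hqp, Polynomial.eval_prod]
        refine Finset.prod_eq_zero (Finset.mem_range.2 (by omega : κv n idx - 1 < m)) ?_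
        simp only [Polynomial.eval_sub, Polynomial.eval_X, Polynomial.eval_C]
        have : κv n idx - 1 + 1 = κv n idx := by omega
        rw [this, sub_self]
      rw [heval, zero_smul, smul_zero]
      exact Submodule.zero_mem _

lemma delta_top_zero :
    bvLaplacian n ((1 : MvPolynomial (Fin n) ℂ) ⊗ₜ[ℂ] topExteriorMonomial n) = 0 := by
  rw [delta_tmul]
  refine Finset.sum_eq_zero fun i _ => ?_
  rw [pderiv_one, TensorProduct.zero_tmul]

end BVAux

/-- Poincaré lemma (Lemma 4.12 of the paper): the BV Laplacian
`Δ = ∑ᵢ ∂/∂xᵢ ⊗ ι(eᵢ*)` squares to zero, its kernel is the sum of its range and the span of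
`1 ⊗ e₁∧⋯∧eₙ`, and `1 ⊗ e₁∧⋯∧eₙ` is not in its range; hence
`H*(ℂ[xⁱ,ξᵢ], Δ) = ℂ·ξ₁∧⋯∧ξₙ`. -/


theorem bvLaplacian_cohomology (n : ℕ) (hn : 1 ≤ n) :
    (bvLaplacian n).comp (bvLaplacian n) = 0 ∧
    LinearMap.ker (bvLaplacian n)
      = LinearMap.range (bvLaplacian n) ⊔
          Submodule.span ℂ {(1 : MvPolynomial (Fin n) ℂ) ⊗ₜ[ℂ] topExteriorMonomial n} ∧
    (1 : MvPolynomial (Fin n) ℂ) ⊗ₜ[ℂ] topExteriorMonomial n ∉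
      LinearMap.range (bvLaplacian n) := by
  classical
  refine ⟨BVAux.delta_sq, ?_, ?_⟩
  · apply le_antisymm
    · intro v hv
      rw [LinearMap.mem_ker] at hv
      obtain ⟨c, qp, hc, heval, hmem⟩ := BVAux.key_decomp v
      have hdvd : Polynomial.X ∣ (qp - Polynomial.C c) := by
        rw [Polynomial.X_dvd_iff, Polynomial.coeff_sub, Polynomial.coeff_zero_eq_eval_zero,
          heval, Polynomial.coeff_C, if_pos rfl, sub_self]
      obtain ⟨r', hr⟩ := hdvd
      have hqp : qp = Polynomial.C c + Polynomial.X * r' := by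
        rw [← hr]; ring
      have expand : (Polynomial.aeval (BVAux.NN n)) qp v
          = c • v + BVAux.NN n ((Polynomial.aeval (BVAux.NN n)) r' v) := by
        rw [hqp, map_add, Polynomial.aeval_C, Polynomial.aeval_mul, Polynomial.aeval_X,
          LinearMap.add_apply, Module.algebraMap_end_apply, Module.End.mul_apply]
      have hNu : BVAux.NN n ((Polynomial.aeval (BVAux.NN n)) r' v)
          = bvLaplacian n (BVAux.hh n ((Polynomial.aeval (BVAux.NN n)) r' v)) := by
        rw [BVAux.NN_apply, BVAux.commute_delta_aeval, hv, map_zero, map_zero, add_zero]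
      have hcv : c • v = (Polynomial.aeval (BVAux.NN n)) qp v
          - bvLaplacian n (BVAux.hh n ((Polynomial.aeval (BVAux.NN n)) r' v)) := by
        rw [expand, hNu]; abel
      have hv' : v = c⁻¹ • ((Polynomial.aeval (BVAux.NN n)) qp v)
          - c⁻¹ • bvLaplacian n (BVAux.hh n ((Polynomial.aeval (BVAux.NN n)) r' v)) := by
        have h0 := congrArg (fun z => c⁻¹ • z) hcv
        simp only [smul_smul, inv_mul_cancel₀ hc, one_smul, smul_sub] at h0
        exact h0
      have hy : (Polynomial.aeval (BVAux.NN n)) qp v ∈ Submodule.span ℂ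
          {(1 : MvPolynomial (Fin n) ℂ) ⊗ₜ[ℂ] topExteriorMonomial n} := by
        rw [← BVAux.bP_top]; exact hmem
      refine Submodule.mem_sup.2
        ⟨-(c⁻¹ • bvLaplacian n (BVAux.hh n ((Polynomial.aeval (BVAux.NN n)) r' v))), ?_,
          c⁻¹ • ((Polynomial.aeval (BVAux.NN n)) qp v), Submodule.smul_mem _ _ hy, ?_⟩
      · exact Submodule.neg_mem _ (Submodule.smul_mem _ _ ⟨_, rfl⟩)
      · rw [neg_add_eq_sub, ← hv']
    · refine sup_le ?_ ?_
      · rintro x ⟨y, rfl⟩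
        exact LinearMap.mem_ker.2 (BVAux.delta_delta y)
      · rw [Submodule.span_le]
        intro x hx
        rw [Set.mem_singleton_iff] at hx
        rw [hx]
        exact LinearMap.mem_ker.2 BVAux.delta_top_zero
  · rintro ⟨u, hu⟩
    obtain ⟨c, qp, hc, heval, hmem⟩ := BVAux.key_decomp u
    have hΔy : bvLaplacian n ((Polynomial.aeval (BVAux.NN n)) qp u)
        = c • ((1 : MvPolynomial (Fin n) ℂ) ⊗ₜ[ℂ] topExteriorMonomial n) := by
      rw [BVAux.commute_delta_aeval, hu, ← BVAux.bP_top, BVAux.aeval_bP, BVAux.κv_univ_zero,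
        Nat.cast_zero, heval, BVAux.bP_top]
    obtain ⟨s, hs⟩ := Submodule.mem_span_singleton.1 hmem
    have hzero : bvLaplacian n ((Polynomial.aeval (BVAux.NN n)) qp u) = 0 := by
      rw [← hs, map_smul, BVAux.bP_top, BVAux.delta_top_zero, smul_zero]
    rw [hzero] at hΔy
    have h1 : (1 : MvPolynomial (Fin n) ℂ) ⊗ₜ[ℂ] topExteriorMonomial n = 0 := by
      have := congrArg (fun z => c⁻¹ • z) hΔy
      simpa [smul_smul, inv_mul_cancel₀ hc] using this.symm
    have hne := (BVAux.bP n).ne_zero (0, Finset.univ)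
    rw [BVAux.bP_top] at hne
    exact hne h1
end
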